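/- Let λ be a partition of a positive integer n ≥ 3 and let i satisfy 1 ≤ i ≤ n−2. Then the number of standard Young tableaux T of shape λ with i ∈ D(T) and i+1 ∉ D(T) equals the number of standard Young tableaux T of shape λ with i ∉ D(T) and i+1 ∈ D(T). -/
import Mathlib


open scoped BigOperators

/-- A standard Young tableau of shape `Y` (a Young diagram with `Y.card = n`):
a bijective filling of the cells of `Y` by the numbers `1, …, n`, strictly increasing
along each row (left to right) and down each column.  Entries outside the
diagram are `0`. -/
structure SYT (Y : YoungDiagram) where
  entry : ℕ → ℕ → ℕ
  bijOn : Set.BijOn (fun c : ℕ × ℕ => entry c.1 c.2) ↑Y.cells (Set.Icc 1 Y.card)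
  row_strict : ∀ ⦃i j1 j2 : ℕ⦄, j1 < j2 → (i, j2) ∈ Y → entry i j1 < entry i j2
  col_strict : ∀ ⦃i1 i2 j : ℕ⦄, i1 < i2 → (i2, j) ∈ Y → entry i1 j < entry i2 j
  zeros : ∀ ⦃i j : ℕ⦄, (i, j) ∉ Y → entry i j = 0

namespace SYT

variable {Y : YoungDiagram}

/-- `i` is a descent of `T` : the entry `i + 1` lies in a strictly lower row
than the entry `i`. -/
def IsDescent (T : SYT Y) (i : ℕ) : Prop :=
  ∃ c ∈ Y.cells, ∃ c' ∈ Y.cells,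
    T.entry c.1 c.2 = i ∧ T.entry c'.1 c'.2 = i + 1 ∧ c.1 < c'.1

open Classical in
/-- The descent set `D(T)` of a standard Young tableau, as a finset.
(Descents necessarily lie in `{1, …, n - 1}` ⊆ `range n`.) -/
noncomputable def descents (T : SYT Y) : Finset ℕ :=
  (Finset.range Y.card).filter fun i => T.IsDescent i

/-- The major index `maj(T) = ∑_{i ∈ D(T)} i`. -/
noncomputable def maj (T : SYT Y) : ℕ :=
  ∑ i ∈ T.descents, i

/-- The descent function `d_f(T) = ∑_{i ∈ D(T)} f(i)`. -/
noncomputable def dfun (f : ℕ → ℝ) (T : SYT Y) : ℝ :=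
  ∑ i ∈ T.descents, f i

end SYT

/-- Expectation of a statistic `g` over uniformly random standard Young tableaux
of shape `Y` : `E_λ[g] = (1/f^λ) ∑_T g(T)`. -/
noncomputable def sytExpect (Y : YoungDiagram) (g : SYT Y → ℝ) : ℝ :=
  (∑ᶠ T : SYT Y, g T) / (Nat.card (SYT Y) : ℝ)

/-- Variance of a statistic `g` : `Var_λ[g] = E_λ[g²] − (E_λ[g])²`. -/
noncomputable def sytVar (Y : YoungDiagram) (g : SYT Y → ℝ) : ℝ :=
  sytExpect Y (fun T => (g T) ^ 2) - (sytExpect Y g) ^ 2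

/-- Probability of an event `P` for a uniformly random standard Young tableau of shape `Y`. -/
noncomputable def sytProb (Y : YoungDiagram) (P : SYT Y → Prop) : ℝ :=
  (Nat.card {T : SYT Y // P T} : ℝ) / (Nat.card (SYT Y) : ℝ)

/-- The constant `c(λ) = [C(n,2) − Σ_i C(λ_i,2) + Σ_j C(λ'_j,2)] / (n(n−1))`.
Rows and columns are 0-indexed; since `Y` has at most `Y.card` nonempty rows and
columns, the sums over `range Y.card` capture all nonzero terms. -/
noncomputable def cpar (Y : YoungDiagram) : ℝ :=
  ((Y.card.choose 2 : ℝ) - ∑ i ∈ Finset.range Y.card, ((Y.rowLen i).choose 2 : ℝ)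
      + ∑ j ∈ Finset.range Y.card, ((Y.colLen j).choose 2 : ℝ))
    / ((Y.card : ℝ) * ((Y.card : ℝ) - 1))

/-- The hook length of the cell `c = (i, j)` (0-indexed):
`h_{ij} = λ_{i+1} + λ'_{j+1} − (i+1) − (j+1) + 1 = rowLen i + colLen j − i − j − 1`. -/
def hookLen (Y : YoungDiagram) (c : ℕ × ℕ) : ℕ :=
  Y.rowLen c.1 + Y.colLen c.2 - c.1 - c.2 - 1

namespace SYTAux

variable {Y : YoungDiagram}

lemma syt_ext {T T' : SYT Y} (h : T.entry = T'.entry) : T = T' := by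
  cases T; cases T'; simp_all

lemma entry_mem {T : SYT Y} {c : ℕ × ℕ} (hc : c ∈ Y) :
    T.entry c.1 c.2 ∈ Set.Icc 1 Y.card :=
  T.bijOn.mapsTo (by simpa using (Y.mem_cells c).2 hc)

lemma entry_lt_of_le {T : SYT Y} {r' r j' j : ℕ} (hr : r' ≤ r) (hj : j' ≤ j)
    (hmem : (r, j) ∈ Y) (hne : (r', j') ≠ (r, j)) :
    T.entry r' j' < T.entry r j := by
  rcases hj.lt_or_eq with hj' | rfl
  · have h1 : T.entry r' j' < T.entry r' j := T.row_strict hj' (Y.up_left_mem hr le_rfl hmem)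
    rcases hr.lt_or_eq with hr' | rfl
    · exact h1.trans (T.col_strict hr' hmem)
    · exact h1
  · rcases hr.lt_or_eq with hr' | rfl
    · exact T.col_strict hr' hmem
    · exact absurd rfl hne

/-- The (unique) cell of `Y` containing the entry `v`. -/
noncomputable def cellOf (T : SYT Y) (v : ℕ) : ℕ × ℕ :=
  if h : v ∈ Set.Icc 1 Y.card then (T.bijOn.surjOn h).choose else (0, 0)

lemma cellOf_spec {T : SYT Y} {v : ℕ} (h : v ∈ Set.Icc 1 Y.card) :
    cellOf T v ∈ Y ∧ T.entry (cellOf T v).1 (cellOf T v).2 = v := by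
  rw [cellOf, dif_pos h]
  obtain ⟨hm, he⟩ := (T.bijOn.surjOn h).choose_spec
  exact ⟨(Y.mem_cells _).1 (by simpa using hm), he⟩

lemma cellOf_mem {T : SYT Y} {v : ℕ} (h : v ∈ Set.Icc 1 Y.card) :
    cellOf T v ∈ Y := (cellOf_spec h).1

lemma entry_cellOf {T : SYT Y} {v : ℕ} (h : v ∈ Set.Icc 1 Y.card) :
    T.entry (cellOf T v).1 (cellOf T v).2 = v := (cellOf_spec h).2

lemma cellOf_eq {T : SYT Y} {v : ℕ} {c : ℕ × ℕ} (hc : c ∈ Y)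
    (he : T.entry c.1 c.2 = v) : cellOf T v = c := by
  have hv : v ∈ Set.Icc 1 Y.card := he ▸ entry_mem hc
  obtain ⟨hm, he'⟩ := cellOf_spec (T := T) hv
  exact T.bijOn.injOn (by simpa using (Y.mem_cells _).2 hm)
    (by simpa using (Y.mem_cells _).2 hc) (he'.trans he.symm)

lemma isDescent_iff {T : SYT Y} {v : ℕ} (hv : 1 ≤ v) (hn : v + 1 ≤ Y.card) :
    T.IsDescent v ↔ (cellOf T v).1 < (cellOf T (v + 1)).1 := by
  have h1 : v ∈ Set.Icc 1 Y.card := ⟨hv, by omega⟩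
  have h2 : v + 1 ∈ Set.Icc 1 Y.card := ⟨by omega, hn⟩
  constructor
  · rintro ⟨c, hc, c', hc', e1, e2, hlt⟩
    rw [cellOf_eq ((Y.mem_cells c).1 hc) e1, cellOf_eq ((Y.mem_cells c').1 hc') e2]
    exact hlt
  · intro h
    exact ⟨cellOf T v, (Y.mem_cells _).2 (cellOf_mem h1), cellOf T (v + 1),
      (Y.mem_cells _).2 (cellOf_mem h2), entry_cellOf h1, entry_cellOf h2, h⟩

/-- Trichotomy : for consecutive entries `v`, `v+1`, exactly one of
"`v+1` in a strictly lower row" and "`v+1` in a strictly larger column" holds. -/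
lemma row_lt_iff {T : SYT Y} {v : ℕ} (hv : 1 ≤ v) (hn : v + 1 ≤ Y.card) :
    (cellOf T v).1 < (cellOf T (v + 1)).1 ↔ ¬ (cellOf T v).2 < (cellOf T (v + 1)).2 := by
  have h1 : v ∈ Set.Icc 1 Y.card := ⟨hv, by omega⟩
  have h2 : v + 1 ∈ Set.Icc 1 Y.card := ⟨by omega, hn⟩
  set c := cellOf T v with hcdef
  set c' := cellOf T (v + 1) with hcdef'
  have hc : (c.1, c.2) ∈ Y := by simpa using cellOf_mem (T := T) h1
  have hc' : (c'.1, c'.2) ∈ Y := by simpa using cellOf_mem (T := T) h2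
  have he : T.entry c.1 c.2 = v := entry_cellOf h1
  have he' : T.entry c'.1 c'.2 = v + 1 := entry_cellOf h2
  constructor
  · intro hr hcol
    have hm : (c.1, c'.2) ∈ Y := Y.up_left_mem hr.le le_rfl hc'
    have a1 : T.entry c.1 c.2 < T.entry c.1 c'.2 := T.row_strict hcol hm
    have a2 : T.entry c.1 c'.2 < T.entry c'.1 c'.2 := T.col_strict hr hc'
    omega
  · intro hcol
    by_contra hr
    have hne : (c'.1, c'.2) ≠ (c.1, c.2) := by
      intro hEq
      rw [Prod.mk.injEq] at hEq
      rw [hEq.1, hEq.2] at he'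
      omega
    have := entry_lt_of_le (T := T) (not_lt.1 hr) (not_lt.1 hcol) hc hne
    omega

/-- The entries `v` and `v+2` cannot be in strictly increasing position in
both coordinates (else `v+1` would have to occupy two different cells). -/
lemma not_both {T : SYT Y} {v : ℕ} (hv : 1 ≤ v) (hn : v + 2 ≤ Y.card) :
    ¬ ((cellOf T v).1 < (cellOf T (v + 2)).1 ∧ (cellOf T v).2 < (cellOf T (v + 2)).2) := by
  rintro ⟨hr, hcol⟩
  have h1 : v ∈ Set.Icc 1 Y.card := ⟨hv, by omega⟩
  have h3 : v + 2 ∈ Set.Icc 1 Y.card := ⟨by omega, hn⟩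
  set c := cellOf T v with hcdef
  set e := cellOf T (v + 2) with hedef
  have hc : (c.1, c.2) ∈ Y := by simpa using cellOf_mem (T := T) h1
  have he : (e.1, e.2) ∈ Y := by simpa using cellOf_mem (T := T) h3
  have hec : T.entry c.1 c.2 = v := entry_cellOf h1
  have hee : T.entry e.1 e.2 = v + 2 := entry_cellOf h3
  have hm1 : (c.1, e.2) ∈ Y := Y.up_left_mem hr.le le_rfl he
  have hm2 : (e.1, c.2) ∈ Y := Y.up_left_mem le_rfl hcol.le he
  have a1 : T.entry c.1 c.2 < T.entry c.1 e.2 := T.row_strict hcol hm1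
  have a2 : T.entry c.1 e.2 < T.entry e.1 e.2 := T.col_strict hr he
  have b1 : T.entry c.1 c.2 < T.entry e.1 c.2 := T.col_strict hr hm2
  have b2 : T.entry e.1 c.2 < T.entry e.1 e.2 := T.row_strict hcol he
  have k1 : cellOf T (v + 1) = (c.1, e.2) := cellOf_eq hm1 (show T.entry c.1 e.2 = v + 1 by omega)
  have k2 : cellOf T (v + 1) = (e.1, c.2) := cellOf_eq hm2 (show T.entry e.1 c.2 = v + 1 by omega)
  rw [k1, Prod.mk.injEq] at k2
  omega

/-- The transposition of the values `v` and `v+1`. -/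
def sEntry (v x : ℕ) : ℕ := if x = v then v + 1 else if x = v + 1 then v else x

lemma sEntry_invol (v x : ℕ) : sEntry v (sEntry v x) = x := by
  unfold sEntry; split_ifs <;> omega

lemma sEntry_lt {v x y : ℕ} (h : x < y) (hxy : ¬(x = v ∧ y = v + 1)) :
    sEntry v x < sEntry v y := by
  unfold sEntry; split_ifs <;> omega

lemma sEntry_mem {v n x : ℕ} (hv : 1 ≤ v) (hn : v + 1 ≤ n) (hx : x ∈ Set.Icc 1 n) :
    sEntry v x ∈ Set.Icc 1 n := by
  obtain ⟨a, b⟩ := hx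
  constructor <;> (unfold sEntry; split_ifs <;> omega)

/-- Swap the entries `v` and `v+1` of a standard tableau; this is again standard
provided the two cells are in different rows and different columns. -/
def swapAdj (T : SYT Y) (v : ℕ) (hv : 1 ≤ v) (hn : v + 1 ≤ Y.card)
    (hrow : (cellOf T v).1 ≠ (cellOf T (v + 1)).1)
    (hcol : (cellOf T v).2 ≠ (cellOf T (v + 1)).2) : SYT Y where
  entry i j := sEntry v (T.entry i j)
  bijOn := by
    have hb : Set.BijOn (sEntry v) (Set.Icc 1 Y.card) (Set.Icc 1 Y.card) := by
      refine ⟨fun x hx => sEntry_mem hv hn hx, fun x _ y _ h => ?_,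
        fun y hy => ⟨sEntry v y, sEntry_mem hv hn hy, sEntry_invol v y⟩⟩
      have := congrArg (sEntry v) h
      rwa [sEntry_invol, sEntry_invol] at this
    exact hb.comp T.bijOn
  row_strict := by
    intro i j1 j2 hj hm
    have hm1 : (i, j1) ∈ Y := Y.up_left_mem le_rfl hj.le hm
    refine sEntry_lt (T.row_strict hj hm) ?_
    rintro ⟨e1, e2⟩
    exact hrow (by rw [cellOf_eq hm1 e1, cellOf_eq hm e2])
  col_strict := by
    intro i1 i2 j h1 hm
    have hm1 : (i1, j) ∈ Y := Y.up_left_mem h1.le le_rfl hm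
    refine sEntry_lt (T.col_strict h1 hm) ?_
    rintro ⟨e1, e2⟩
    exact hcol (by rw [cellOf_eq hm1 e1, cellOf_eq hm e2])
  zeros := by
    intro i j h
    show sEntry v (T.entry i j) = 0
    rw [T.zeros h]
    simp [sEntry]
    omega

lemma swapAdj_entry {T : SYT Y} {v : ℕ} (hv : 1 ≤ v) (hn : v + 1 ≤ Y.card)
    (hrow : (cellOf T v).1 ≠ (cellOf T (v + 1)).1)
    (hcol : (cellOf T v).2 ≠ (cellOf T (v + 1)).2) (i j : ℕ) :
    (swapAdj T v hv hn hrow hcol).entry i j = sEntry v (T.entry i j) := rfl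

lemma cellOf_swapAdj_left {T : SYT Y} {v : ℕ} (hv : 1 ≤ v) (hn : v + 1 ≤ Y.card)
    (hrow : (cellOf T v).1 ≠ (cellOf T (v + 1)).1)
    (hcol : (cellOf T v).2 ≠ (cellOf T (v + 1)).2) :
    cellOf (swapAdj T v hv hn hrow hcol) v = cellOf T (v + 1) := by
  have h2 : v + 1 ∈ Set.Icc 1 Y.card := ⟨by omega, hn⟩
  refine cellOf_eq (cellOf_mem h2) ?_
  rw [swapAdj_entry, entry_cellOf h2]
  simp [sEntry]

lemma cellOf_swapAdj_right {T : SYT Y} {v : ℕ} (hv : 1 ≤ v) (hn : v + 1 ≤ Y.card)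
    (hrow : (cellOf T v).1 ≠ (cellOf T (v + 1)).1)
    (hcol : (cellOf T v).2 ≠ (cellOf T (v + 1)).2) :
    cellOf (swapAdj T v hv hn hrow hcol) (v + 1) = cellOf T v := by
  have h1 : v ∈ Set.Icc 1 Y.card := ⟨hv, by omega⟩
  refine cellOf_eq (cellOf_mem h1) ?_
  rw [swapAdj_entry, entry_cellOf h1]
  simp [sEntry]

lemma cellOf_swapAdj_other {T : SYT Y} {v w : ℕ} (hv : 1 ≤ v) (hn : v + 1 ≤ Y.card)
    (hrow : (cellOf T v).1 ≠ (cellOf T (v + 1)).1)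
    (hcol : (cellOf T v).2 ≠ (cellOf T (v + 1)).2)
    (hw : w ∈ Set.Icc 1 Y.card) (hw1 : w ≠ v) (hw2 : w ≠ v + 1) :
    cellOf (swapAdj T v hv hn hrow hcol) w = cellOf T w := by
  refine cellOf_eq (cellOf_mem hw) ?_
  rw [swapAdj_entry, entry_cellOf hw]
  simp [sEntry, hw1, hw2]

lemma swapAdj_swapAdj {T : SYT Y} {v : ℕ} (hv : 1 ≤ v) (hn : v + 1 ≤ Y.card)
    (hrow hcol) (hrow' hcol') :
    swapAdj (swapAdj T v hv hn hrow hcol) v hv hn hrow' hcol' = T := by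
  apply syt_ext
  funext i j
  exact sEntry_invol v (T.entry i j)

lemma isDescent_succ_iff {T : SYT Y} {v : ℕ} (hn : v + 2 ≤ Y.card) :
    T.IsDescent (v + 1) ↔ (cellOf T (v + 1)).1 < (cellOf T (v + 2)).1 :=
  isDescent_iff (by omega) (by omega)

lemma row_lt_iff_succ {T : SYT Y} {v : ℕ} (hn : v + 2 ≤ Y.card) :
    (cellOf T (v + 1)).1 < (cellOf T (v + 2)).1 ↔
      ¬ (cellOf T (v + 1)).2 < (cellOf T (v + 2)).2 :=
  row_lt_iff (by omega) (by omega)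

lemma factsA {T : SYT Y} {v : ℕ} (hv : 1 ≤ v) (hn : v + 2 ≤ Y.card)
    (hd : T.IsDescent v) (hd' : ¬ T.IsDescent (v + 1)) :
    (cellOf T v).1 < (cellOf T (v + 1)).1 ∧ ¬ (cellOf T v).2 < (cellOf T (v + 1)).2 ∧
      ¬ (cellOf T (v + 1)).1 < (cellOf T (v + 2)).1 ∧
      (cellOf T (v + 1)).2 < (cellOf T (v + 2)).2 := by
  have a1 : (cellOf T v).1 < (cellOf T (v + 1)).1 := (isDescent_iff hv (by omega)).1 hd
  have a2 := (row_lt_iff hv (show v + 1 ≤ Y.card by omega) (T := T)).1 a1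
  have a3 : ¬ (cellOf T (v + 1)).1 < (cellOf T (v + 2)).1 := fun h =>
    hd' ((isDescent_succ_iff hn).2 h)
  have a4 : (cellOf T (v + 1)).2 < (cellOf T (v + 2)).2 := by
    by_contra hcon
    exact a3 ((row_lt_iff_succ hn).2 hcon)
  exact ⟨a1, a2, a3, a4⟩

lemma factsB {T : SYT Y} {v : ℕ} (hv : 1 ≤ v) (hn : v + 2 ≤ Y.card)
    (hd : ¬ T.IsDescent v) (hd' : T.IsDescent (v + 1)) :
    ¬ (cellOf T v).1 < (cellOf T (v + 1)).1 ∧ (cellOf T v).2 < (cellOf T (v + 1)).2 ∧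
      (cellOf T (v + 1)).1 < (cellOf T (v + 2)).1 ∧
      ¬ (cellOf T (v + 1)).2 < (cellOf T (v + 2)).2 := by
  have a1 : ¬ (cellOf T v).1 < (cellOf T (v + 1)).1 := fun h =>
    hd ((isDescent_iff hv (by omega)).2 h)
  have a2 : (cellOf T v).2 < (cellOf T (v + 1)).2 := by
    by_contra hcon
    exact a1 ((row_lt_iff hv (show v + 1 ≤ Y.card by omega)).2 hcon)
  have a3 : (cellOf T (v + 1)).1 < (cellOf T (v + 2)).1 := (isDescent_succ_iff hn).1 hd'
  have a4 := (row_lt_iff_succ hn (T := T)).1 a3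
  exact ⟨a1, a2, a3, a4⟩

open Classical in
/-- The elementary dual-equivalence involution on entries `v, v+1, v+2`. -/
noncomputable def flip (T : SYT Y) (v : ℕ) (hv : 1 ≤ v) (hn : v + 2 ≤ Y.card) : SYT Y :=
  if h1 : ((T.IsDescent v ∧ ¬ T.IsDescent (v + 1)) ∧ (cellOf T v).1 < (cellOf T (v + 2)).1)
      ∨ ((¬ T.IsDescent v ∧ T.IsDescent (v + 1)) ∧ (cellOf T v).2 < (cellOf T (v + 2)).2) then
    swapAdj T v hv (by omega)
      (by
        rcases h1 with ⟨⟨hd, hd'⟩, _⟩ | ⟨⟨hd, hd'⟩, hcc⟩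
        · exact (factsA hv hn hd hd').1.ne
        · obtain ⟨b1, b2, b3, b4⟩ := factsB hv hn hd hd'
          have e2 : ¬ (cellOf T v).1 < (cellOf T (v + 2)).1 := fun h =>
            not_both hv hn ⟨h, hcc⟩
          omega)
      (by
        rcases h1 with ⟨⟨hd, hd'⟩, hrr⟩ | ⟨⟨hd, hd'⟩, _⟩
        · obtain ⟨a1, a2, a3, a4⟩ := factsA hv hn hd hd'
          have e2 : ¬ (cellOf T v).2 < (cellOf T (v + 2)).2 := fun h =>
            not_both hv hn ⟨hrr, h⟩
          omega
        · exact (factsB hv hn hd hd').2.1.ne)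
  else if h2 : (T.IsDescent v ∧ ¬ T.IsDescent (v + 1)) ∨ (¬ T.IsDescent v ∧ T.IsDescent (v + 1)) then
    swapAdj T (v + 1) (by omega) (by omega)
      (by
        show (cellOf T (v + 1)).1 ≠ (cellOf T (v + 2)).1
        rcases h2 with ⟨hd, hd'⟩ | ⟨hd, hd'⟩
        · obtain ⟨a1, a2, a3, a4⟩ := factsA hv hn hd hd'
          have e2 : ¬ (cellOf T v).1 < (cellOf T (v + 2)).1 := fun h =>
            h1 (Or.inl ⟨⟨hd, hd'⟩, h⟩)
          omega
        · exact (factsB hv hn hd hd').2.2.1.ne)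
      (by
        show (cellOf T (v + 1)).2 ≠ (cellOf T (v + 2)).2
        rcases h2 with ⟨hd, hd'⟩ | ⟨hd, hd'⟩
        · exact (factsA hv hn hd hd').2.2.2.ne
        · obtain ⟨b1, b2, b3, b4⟩ := factsB hv hn hd hd'
          have e2 : ¬ (cellOf T v).2 < (cellOf T (v + 2)).2 := fun h =>
            h1 (Or.inr ⟨⟨hd, hd'⟩, h⟩)
          omega)
  else T

lemma flip_pos1 {T : SYT Y} {v : ℕ} (hv : 1 ≤ v) (hn : v + 2 ≤ Y.card)
    (h : ((T.IsDescent v ∧ ¬ T.IsDescent (v + 1)) ∧ (cellOf T v).1 < (cellOf T (v + 2)).1)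
      ∨ ((¬ T.IsDescent v ∧ T.IsDescent (v + 1)) ∧ (cellOf T v).2 < (cellOf T (v + 2)).2)) :
    ∃ (hrow : (cellOf T v).1 ≠ (cellOf T (v + 1)).1)
      (hcol : (cellOf T v).2 ≠ (cellOf T (v + 1)).2),
      flip T v hv hn = swapAdj T v hv (by omega) hrow hcol :=
  ⟨_, _, by unfold flip; rw [dif_pos h]⟩

lemma flip_pos2 {T : SYT Y} {v : ℕ} (hv : 1 ≤ v) (hn : v + 2 ≤ Y.card)
    (hneg : ¬ (((T.IsDescent v ∧ ¬ T.IsDescent (v + 1)) ∧ (cellOf T v).1 < (cellOf T (v + 2)).1)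
      ∨ ((¬ T.IsDescent v ∧ T.IsDescent (v + 1)) ∧ (cellOf T v).2 < (cellOf T (v + 2)).2)))
    (h : (T.IsDescent v ∧ ¬ T.IsDescent (v + 1)) ∨ (¬ T.IsDescent v ∧ T.IsDescent (v + 1))) :
    ∃ (hrow : (cellOf T (v + 1)).1 ≠ (cellOf T (v + 2)).1)
      (hcol : (cellOf T (v + 1)).2 ≠ (cellOf T (v + 2)).2),
      flip T v hv hn = swapAdj T (v + 1) (by omega) (by omega) hrow hcol :=
  ⟨_, _, by unfold flip; rw [dif_neg hneg, dif_pos h]⟩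

lemma flip_specA {T : SYT Y} {v : ℕ} (hv : 1 ≤ v) (hn : v + 2 ≤ Y.card)
    (h : T.IsDescent v ∧ ¬ T.IsDescent (v + 1)) :
    (¬ (flip T v hv hn).IsDescent v ∧ (flip T v hv hn).IsDescent (v + 1)) ∧
      flip (flip T v hv hn) v hv hn = T := by
  obtain ⟨hd, hd'⟩ := h
  obtain ⟨a1, a2, a3, a4⟩ := factsA hv hn hd hd'
  have hn1 : v + 1 ≤ Y.card := by omega
  have hv3 : v + 2 ∈ Set.Icc 1 Y.card := ⟨by omega, hn⟩
  have hv1 : v ∈ Set.Icc 1 Y.card := ⟨hv, by omega⟩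
  by_cases hc : (cellOf T v).1 < (cellOf T (v + 2)).1
  · obtain ⟨hrow, hcol, heq⟩ := flip_pos1 hv hn (Or.inl ⟨⟨hd, hd'⟩, hc⟩)
    rw [heq]
    set T' := swapAdj T v hv (by omega) hrow hcol with hT'
    have k0 : cellOf T' v = cellOf T (v + 1) := cellOf_swapAdj_left hv _ hrow hcol
    have k1 : cellOf T' (v + 1) = cellOf T v := cellOf_swapAdj_right hv _ hrow hcol
    have k2 : cellOf T' (v + 2) = cellOf T (v + 2) :=
      cellOf_swapAdj_other hv _ hrow hcol hv3 (by omega) (by omega)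
    have d1 : ¬ T'.IsDescent v := by
      rw [isDescent_iff hv hn1, k0, k1]; omega
    have d2 : T'.IsDescent (v + 1) := by
      rw [isDescent_succ_iff hn, k1, k2]; exact hc
    refine ⟨⟨d1, d2⟩, ?_⟩
    obtain ⟨hrow', hcol', heq'⟩ := flip_pos1 hv hn
      (Or.inr ⟨⟨d1, d2⟩, by rw [k0, k2]; exact a4⟩)
    rw [heq']
    exact swapAdj_swapAdj hv _ hrow hcol hrow' hcol'
  · have hneg : ¬ (((T.IsDescent v ∧ ¬ T.IsDescent (v + 1)) ∧ (cellOf T v).1 < (cellOf T (v + 2)).1)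
        ∨ ((¬ T.IsDescent v ∧ T.IsDescent (v + 1)) ∧ (cellOf T v).2 < (cellOf T (v + 2)).2)) := by
      rintro (⟨_, hx⟩ | ⟨⟨hx, _⟩, _⟩)
      · exact hc hx
      · exact hx hd
    obtain ⟨hrow, hcol, heq⟩ := flip_pos2 hv hn hneg (Or.inl ⟨hd, hd'⟩)
    rw [heq]
    set T' := swapAdj T (v + 1) (by omega) (by omega) hrow hcol with hT'
    have k0 : cellOf T' v = cellOf T v :=
      cellOf_swapAdj_other (by omega) _ hrow hcol hv1 (by omega) (by omega)
    have k1 : cellOf T' (v + 1) = cellOf T (v + 2) := cellOf_swapAdj_left (by omega) _ hrow hcol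
    have k2 : cellOf T' (v + 2) = cellOf T (v + 1) := cellOf_swapAdj_right (by omega) _ hrow hcol
    have d1 : ¬ T'.IsDescent v := by
      rw [isDescent_iff hv hn1, k0, k1]; exact hc
    have d2 : T'.IsDescent (v + 1) := by
      rw [isDescent_succ_iff hn, k1, k2]; omega
    refine ⟨⟨d1, d2⟩, ?_⟩
    have hneg' : ¬ (((T'.IsDescent v ∧ ¬ T'.IsDescent (v + 1)) ∧ (cellOf T' v).1 < (cellOf T' (v + 2)).1)
        ∨ ((¬ T'.IsDescent v ∧ T'.IsDescent (v + 1)) ∧ (cellOf T' v).2 < (cellOf T' (v + 2)).2)) := by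
      rintro (⟨⟨hx, _⟩, _⟩ | ⟨_, hx⟩)
      · exact d1 hx
      · rw [k0, k2] at hx; exact a2 hx
    obtain ⟨hrow', hcol', heq'⟩ := flip_pos2 hv hn hneg' (Or.inr ⟨d1, d2⟩)
    rw [heq']
    exact swapAdj_swapAdj (by omega) _ hrow hcol hrow' hcol'

lemma flip_specB {T : SYT Y} {v : ℕ} (hv : 1 ≤ v) (hn : v + 2 ≤ Y.card)
    (h : ¬ T.IsDescent v ∧ T.IsDescent (v + 1)) :
    ((flip T v hv hn).IsDescent v ∧ ¬ (flip T v hv hn).IsDescent (v + 1)) ∧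
      flip (flip T v hv hn) v hv hn = T := by
  obtain ⟨hd, hd'⟩ := h
  obtain ⟨b1, b2, b3, b4⟩ := factsB hv hn hd hd'
  have hn1 : v + 1 ≤ Y.card := by omega
  have hv3 : v + 2 ∈ Set.Icc 1 Y.card := ⟨by omega, hn⟩
  have hv1 : v ∈ Set.Icc 1 Y.card := ⟨hv, by omega⟩
  by_cases hc : (cellOf T v).2 < (cellOf T (v + 2)).2
  · have e : ¬ (cellOf T v).1 < (cellOf T (v + 2)).1 := fun hx => not_both hv hn ⟨hx, hc⟩
    obtain ⟨hrow, hcol, heq⟩ := flip_pos1 hv hn (Or.inr ⟨⟨hd, hd'⟩, hc⟩)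
    rw [heq]
    set T' := swapAdj T v hv (by omega) hrow hcol with hT'
    have k0 : cellOf T' v = cellOf T (v + 1) := cellOf_swapAdj_left hv _ hrow hcol
    have k1 : cellOf T' (v + 1) = cellOf T v := cellOf_swapAdj_right hv _ hrow hcol
    have k2 : cellOf T' (v + 2) = cellOf T (v + 2) :=
      cellOf_swapAdj_other hv _ hrow hcol hv3 (by omega) (by omega)
    have d1 : T'.IsDescent v := by
      rw [isDescent_iff hv hn1, k0, k1]; omega
    have d2 : ¬ T'.IsDescent (v + 1) := by
      rw [isDescent_succ_iff hn, k1, k2]; exact e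
    refine ⟨⟨d1, d2⟩, ?_⟩
    obtain ⟨hrow', hcol', heq'⟩ := flip_pos1 hv hn
      (Or.inl ⟨⟨d1, d2⟩, by rw [k0, k2]; exact b3⟩)
    rw [heq']
    exact swapAdj_swapAdj hv _ hrow hcol hrow' hcol'
  · have hneg : ¬ (((T.IsDescent v ∧ ¬ T.IsDescent (v + 1)) ∧ (cellOf T v).1 < (cellOf T (v + 2)).1)
        ∨ ((¬ T.IsDescent v ∧ T.IsDescent (v + 1)) ∧ (cellOf T v).2 < (cellOf T (v + 2)).2)) := by
      rintro (⟨⟨hx, _⟩, _⟩ | ⟨_, hx⟩)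
      · exact hd hx
      · exact hc hx
    obtain ⟨hrow, hcol, heq⟩ := flip_pos2 hv hn hneg (Or.inr ⟨hd, hd'⟩)
    rw [heq]
    set T' := swapAdj T (v + 1) (by omega) (by omega) hrow hcol with hT'
    have k0 : cellOf T' v = cellOf T v :=
      cellOf_swapAdj_other (by omega) _ hrow hcol hv1 (by omega) (by omega)
    have k1 : cellOf T' (v + 1) = cellOf T (v + 2) := cellOf_swapAdj_left (by omega) _ hrow hcol
    have k2 : cellOf T' (v + 2) = cellOf T (v + 1) := cellOf_swapAdj_right (by omega) _ hrow hcol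
    have hr13 : (cellOf T v).1 < (cellOf T (v + 2)).1 := by
      by_contra hx
      have hmem : ((cellOf T v).1, (cellOf T v).2) ∈ Y := by
        simpa using cellOf_mem (T := T) hv1
      have hne : ((cellOf T (v + 2)).1, (cellOf T (v + 2)).2) ≠ ((cellOf T v).1, (cellOf T v).2) := by
        intro hEq
        rw [Prod.mk.injEq] at hEq
        have e1 : T.entry (cellOf T v).1 (cellOf T v).2 = v := entry_cellOf hv1
        have e2 : T.entry (cellOf T (v + 2)).1 (cellOf T (v + 2)).2 = v + 2 := entry_cellOf hv3
        rw [hEq.1, hEq.2] at e2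
        omega
      have := entry_lt_of_le (T := T) (not_lt.1 hx) (not_lt.1 hc) hmem hne
      have e1 : T.entry (cellOf T v).1 (cellOf T v).2 = v := entry_cellOf hv1
      have e2 : T.entry (cellOf T (v + 2)).1 (cellOf T (v + 2)).2 = v + 2 := entry_cellOf hv3
      omega
    have d1 : T'.IsDescent v := by
      rw [isDescent_iff hv hn1, k0, k1]; exact hr13
    have d2 : ¬ T'.IsDescent (v + 1) := by
      rw [isDescent_succ_iff hn, k1, k2]; omega
    refine ⟨⟨d1, d2⟩, ?_⟩
    have hneg' : ¬ (((T'.IsDescent v ∧ ¬ T'.IsDescent (v + 1)) ∧ (cellOf T' v).1 < (cellOf T' (v + 2)).1)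
        ∨ ((¬ T'.IsDescent v ∧ T'.IsDescent (v + 1)) ∧ (cellOf T' v).2 < (cellOf T' (v + 2)).2)) := by
      rintro (⟨_, hx⟩ | ⟨⟨hx, _⟩, _⟩)
      · rw [k0, k2] at hx; exact b1 hx
      · exact hx d1
    obtain ⟨hrow', hcol', heq'⟩ := flip_pos2 hv hn hneg' (Or.inl ⟨d1, d2⟩)
    rw [heq']
    exact swapAdj_swapAdj (by omega) _ hrow hcol hrow' hcol'

end SYTAux

/-- For a partition `λ` of `n ≥ 3` and `1 ≤ i ≤ n − 2`, the number of
standard Young tableaux of shape `λ` with `i ∈ D(T)` and `i+1 ∉ D(T)` equals the number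
with `i ∉ D(T)` and `i+1 ∈ D(T)`. -/
theorem count_descent_nondescent_symm (n : ℕ) (hn : 3 ≤ n) (Y : YoungDiagram)
    (hY : Y.card = n) (i : ℕ) (hi : 1 ≤ i) (hi' : i ≤ n - 2) :
    Nat.card {T : SYT Y // T.IsDescent i ∧ ¬T.IsDescent (i + 1)} =
      Nat.card {T : SYT Y // ¬T.IsDescent i ∧ T.IsDescent (i + 1)} := by
  have hv2 : i + 2 ≤ Y.card := by omega
  exact Nat.card_congr
    ⟨fun T => ⟨SYTAux.flip T.1 i hi hv2, (SYTAux.flip_specA hi hv2 T.2).1⟩,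
      fun T => ⟨SYTAux.flip T.1 i hi hv2, (SYTAux.flip_specB hi hv2 T.2).1⟩,
      fun T => Subtype.ext (SYTAux.flip_specA hi hv2 T.2).2,
      fun T => Subtype.ext (SYTAux.flip_specB hi hv2 T.2).2⟩
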